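/- Suppose R_M ⫫ (M, R_Y) | (X, A, Y) and R_Y ⫫ (Y, R_M) | (X, A, M). Then the quantity [P(R_M = 1 | X, A) · P(R_Y = 1 | X, A, M, R_M = 1)] / P(R_M = 1, R_Y = 1 | X, A, M, Y) equals P(R_M = 1 | X, A) / P(R_M = 1 | X, A, Y, R_Y = 1), for all values making all conditioning events and denominators positive. -/

import Mathlib

open scoped Classical

noncomputable def Pr {Ω : Type*} [Fintype Ω] (p : Ω → ℝ) (E : Ω → Prop) : ℝ :=
  ∑ ω, if E ω then p ω else 0

noncomputable def cPr {Ω : Type*} [Fintype Ω] (p : Ω → ℝ) (E F : Ω → Prop) : ℝ :=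
  Pr p (fun ω => E ω ∧ F ω) / Pr p F

noncomputable def odds {Ω : Type*} [Fintype Ω] (p : Ω → ℝ) (E F : Ω → Prop) : ℝ :=
  cPr p E F / cPr p (fun ω => ¬ E ω) F

lemma Pr_nonneg {Ω : Type*} [Fintype Ω] (p : Ω → ℝ) (hp : ∀ ω, 0 ≤ p ω) (E : Ω → Prop) :
    0 ≤ Pr p E := by
  unfold Pr
  apply Finset.sum_nonneg
  intro ω _
  split_ifs <;> simp [hp ω]

lemma Pr_congr {Ω : Type*} [Fintype Ω] (p : Ω → ℝ) {E F : Ω → Prop}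
    (h : ∀ ω, E ω ↔ F ω) : Pr p E = Pr p F := by
  unfold Pr
  exact Finset.sum_congr rfl fun ω _ => by simp [h ω]

lemma Pr_mono {Ω : Type*} [Fintype Ω] (p : Ω → ℝ) (hp : ∀ ω, 0 ≤ p ω) {E F : Ω → Prop}
    (h : ∀ ω, E ω → F ω) : Pr p E ≤ Pr p F := by
  unfold Pr
  apply Finset.sum_le_sum
  intro ω _
  split_ifs with h1 h2
  · exact le_rfl
  · exact absurd (h ω h1) h2
  · exact hp ω
  · exact le_rfl

lemma Pr_eq_zero {Ω : Type*} [Fintype Ω] (p : Ω → ℝ) (hp : ∀ ω, 0 ≤ p ω) {E F : Ω → Prop}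
    (hF : Pr p F = 0) (h : ∀ ω, E ω → F ω) : Pr p E = 0 :=
  le_antisymm (hF ▸ Pr_mono p hp h) (Pr_nonneg p hp E)

lemma Pr_partition {Ω 𝒱 : Type*} [Fintype Ω] (p : Ω → ℝ) (V : Ω → 𝒱) (G : Ω → Prop) :
    Pr p G = ∑ v ∈ Finset.univ.image V, Pr p (fun ω => V ω = v ∧ G ω) := by
  unfold Pr
  rw [Finset.sum_comm]
  apply Finset.sum_congr rfl
  intro ω _
  by_cases hG : G ω
  · rw [Finset.sum_eq_single_of_mem (V ω) (Finset.mem_image_of_mem V (Finset.mem_univ ω))]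
    · simp [hG]
    · intro b _ hb
      exact if_neg (by rintro ⟨h', -⟩; exact hb h'.symm)
  · simp [hG]

lemma collapse {Ω 𝒱 : Type*} [Fintype Ω] (p : Ω → ℝ) (hp : ∀ ω, 0 ≤ p ω)
    (E F : Ω → Prop) (V : Ω → 𝒱) (c : ℝ)
    (h : ∀ v, 0 < Pr p (fun ω => V ω = v ∧ F ω) →
      Pr p (fun ω => E ω ∧ V ω = v ∧ F ω) = c * Pr p (fun ω => V ω = v ∧ F ω)) :
    Pr p (fun ω => E ω ∧ F ω) = c * Pr p F := by
  rw [Pr_partition p V F, Pr_partition p V (fun ω => E ω ∧ F ω), Finset.mul_sum]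
  apply Finset.sum_congr rfl
  intro v _
  rcases (Pr_nonneg p hp (fun ω => V ω = v ∧ F ω)).lt_or_eq with hpos | h0
  · rw [Pr_congr p (fun ω => by tauto : ∀ ω, (V ω = v ∧ E ω ∧ F ω) ↔ (E ω ∧ V ω = v ∧ F ω))]
    exact h v hpos
  · rw [Pr_eq_zero p hp h0.symm (fun ω h' => ⟨h'.1, h'.2.2⟩), ← h0, mul_zero]

lemma cPr_mul {Ω : Type*} [Fintype Ω] (p : Ω → ℝ) {E F : Ω → Prop} {c : ℝ}
    (hF : Pr p F ≠ 0) (h : cPr p E F = c) :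
    Pr p (fun ω => E ω ∧ F ω) = c * Pr p F := by
  rw [← h]; unfold cPr; rw [div_mul_cancel₀ _ hF]

/-- Identification of the tilting function `g = hk` in Model S4. -/
theorem S4_tilting_identification
    {Ω 𝒳 𝒜 ℳ 𝒴 : Type*} [Fintype Ω]
    (p : Ω → ℝ) (hp : ∀ ω, 0 ≤ p ω) (hsum : ∑ ω, p ω = 1)
    (X : Ω → 𝒳) (A : Ω → 𝒜) (M : Ω → ℳ) (Y : Ω → 𝒴) (RM RY : Ω → ℕ)
    (hRM : ∀ ω, RM ω = 0 ∨ RM ω = 1) (hRY : ∀ ω, RY ω = 0 ∨ RY ω = 1)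
    -- R_M ⫫ (M, R_Y) ∣ (X, A, Y)
    (h1 : ∀ (rm : ℕ) (m : ℳ) (ry : ℕ) (x : 𝒳) (a : 𝒜) (y : 𝒴),
      0 < Pr p (fun ω => M ω = m ∧ RY ω = ry ∧ X ω = x ∧ A ω = a ∧ Y ω = y) →
      cPr p (fun ω => RM ω = rm)
          (fun ω => M ω = m ∧ RY ω = ry ∧ X ω = x ∧ A ω = a ∧ Y ω = y)
        = cPr p (fun ω => RM ω = rm) (fun ω => X ω = x ∧ A ω = a ∧ Y ω = y))
    -- R_Y ⫫ (Y, R_M) ∣ (X, A, M)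
    (h2 : ∀ (ry : ℕ) (y : 𝒴) (rm : ℕ) (x : 𝒳) (a : 𝒜) (m : ℳ),
      0 < Pr p (fun ω => Y ω = y ∧ RM ω = rm ∧ X ω = x ∧ A ω = a ∧ M ω = m) →
      cPr p (fun ω => RY ω = ry)
          (fun ω => Y ω = y ∧ RM ω = rm ∧ X ω = x ∧ A ω = a ∧ M ω = m)
        = cPr p (fun ω => RY ω = ry) (fun ω => X ω = x ∧ A ω = a ∧ M ω = m)) :
    ∀ (x : 𝒳) (a : 𝒜) (m : ℳ) (y : 𝒴),
      0 < Pr p (fun ω => X ω = x ∧ A ω = a ∧ M ω = m ∧ Y ω = y) →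
      0 < Pr p (fun ω => X ω = x ∧ A ω = a ∧ Y ω = y ∧ RY ω = 1) →
      0 < Pr p (fun ω => X ω = x ∧ A ω = a ∧ M ω = m ∧ RM ω = 1) →
      0 < Pr p (fun ω => X ω = x ∧ A ω = a ∧ M ω = m ∧ Y ω = y ∧ RM ω = 1) →
      0 < cPr p (fun ω => RM ω = 1 ∧ RY ω = 1)
            (fun ω => X ω = x ∧ A ω = a ∧ M ω = m ∧ Y ω = y) →
      0 < cPr p (fun ω => RM ω = 1) (fun ω => X ω = x ∧ A ω = a ∧ Y ω = y ∧ RY ω = 1) →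
      (cPr p (fun ω => RM ω = 1) (fun ω => X ω = x ∧ A ω = a)
          * cPr p (fun ω => RY ω = 1) (fun ω => X ω = x ∧ A ω = a ∧ M ω = m ∧ RM ω = 1))
        / cPr p (fun ω => RM ω = 1 ∧ RY ω = 1)
            (fun ω => X ω = x ∧ A ω = a ∧ M ω = m ∧ Y ω = y)
        = cPr p (fun ω => RM ω = 1) (fun ω => X ω = x ∧ A ω = a)
          / cPr p (fun ω => RM ω = 1) (fun ω => X ω = x ∧ A ω = a ∧ Y ω = y ∧ RY ω = 1) := by

  intro x a m y hXAMY hXAYR hXAMR hXAMYR hcc hcr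
  set c1 := cPr p (fun ω => RM ω = 1) (fun ω => X ω = x ∧ A ω = a ∧ Y ω = y) with hc1def
  set c2 := cPr p (fun ω => RY ω = 1) (fun ω => X ω = x ∧ A ω = a ∧ M ω = m) with hc2def
  -- N1
  have N1 : Pr p (fun ω => RY ω = 1 ∧ (X ω = x ∧ A ω = a ∧ M ω = m ∧ RM ω = 1))
      = c2 * Pr p (fun ω => X ω = x ∧ A ω = a ∧ M ω = m ∧ RM ω = 1) := by
    apply collapse p hp _ _ Y c2
    intro v hv
    have e1 : Pr p (fun ω => Y ω = v ∧ RM ω = 1 ∧ X ω = x ∧ A ω = a ∧ M ω = m)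
        = Pr p (fun ω => Y ω = v ∧ X ω = x ∧ A ω = a ∧ M ω = m ∧ RM ω = 1) :=
      Pr_congr p (fun ω => by tauto)
    have hpos : 0 < Pr p (fun ω => Y ω = v ∧ RM ω = 1 ∧ X ω = x ∧ A ω = a ∧ M ω = m) := by
      rw [e1]; exact hv
    have key := cPr_mul p (ne_of_gt hpos) (h2 1 v 1 x a m hpos)
    calc Pr p (fun ω => RY ω = 1 ∧ Y ω = v ∧ X ω = x ∧ A ω = a ∧ M ω = m ∧ RM ω = 1)
        = Pr p (fun ω => RY ω = 1 ∧ Y ω = v ∧ RM ω = 1 ∧ X ω = x ∧ A ω = a ∧ M ω = m) :=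
          Pr_congr p (fun ω => by tauto)
      _ = c2 * Pr p (fun ω => Y ω = v ∧ RM ω = 1 ∧ X ω = x ∧ A ω = a ∧ M ω = m) := key
      _ = c2 * Pr p (fun ω => Y ω = v ∧ X ω = x ∧ A ω = a ∧ M ω = m ∧ RM ω = 1) := by rw [e1]
  -- N2
  have N2 : Pr p (fun ω => RY ω = 1 ∧ (X ω = x ∧ A ω = a ∧ M ω = m ∧ Y ω = y ∧ RM ω = 1))
      = c2 * Pr p (fun ω => X ω = x ∧ A ω = a ∧ M ω = m ∧ Y ω = y ∧ RM ω = 1) := by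
    have e1 : Pr p (fun ω => Y ω = y ∧ RM ω = 1 ∧ X ω = x ∧ A ω = a ∧ M ω = m)
        = Pr p (fun ω => X ω = x ∧ A ω = a ∧ M ω = m ∧ Y ω = y ∧ RM ω = 1) :=
      Pr_congr p (fun ω => by tauto)
    have hpos : 0 < Pr p (fun ω => Y ω = y ∧ RM ω = 1 ∧ X ω = x ∧ A ω = a ∧ M ω = m) := by
      rw [e1]; exact hXAMYR
    have key := cPr_mul p (ne_of_gt hpos) (h2 1 y 1 x a m hpos)
    calc Pr p (fun ω => RY ω = 1 ∧ (X ω = x ∧ A ω = a ∧ M ω = m ∧ Y ω = y ∧ RM ω = 1))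
        = Pr p (fun ω => RY ω = 1 ∧ Y ω = y ∧ RM ω = 1 ∧ X ω = x ∧ A ω = a ∧ M ω = m) :=
          Pr_congr p (fun ω => by tauto)
      _ = c2 * Pr p (fun ω => Y ω = y ∧ RM ω = 1 ∧ X ω = x ∧ A ω = a ∧ M ω = m) := key
      _ = c2 * Pr p (fun ω => X ω = x ∧ A ω = a ∧ M ω = m ∧ Y ω = y ∧ RM ω = 1) := by rw [e1]
  -- N3
  have N3 : Pr p (fun ω => RM ω = 1 ∧ (X ω = x ∧ A ω = a ∧ M ω = m ∧ Y ω = y))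
      = c1 * Pr p (fun ω => X ω = x ∧ A ω = a ∧ M ω = m ∧ Y ω = y) := by
    apply collapse p hp _ _ RY c1
    intro v hv
    have e1 : Pr p (fun ω => M ω = m ∧ RY ω = v ∧ X ω = x ∧ A ω = a ∧ Y ω = y)
        = Pr p (fun ω => RY ω = v ∧ X ω = x ∧ A ω = a ∧ M ω = m ∧ Y ω = y) :=
      Pr_congr p (fun ω => by tauto)
    have hpos : 0 < Pr p (fun ω => M ω = m ∧ RY ω = v ∧ X ω = x ∧ A ω = a ∧ Y ω = y) := by
      rw [e1]; exact hv
    have key := cPr_mul p (ne_of_gt hpos) (h1 1 m v x a y hpos)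
    calc Pr p (fun ω => RM ω = 1 ∧ RY ω = v ∧ X ω = x ∧ A ω = a ∧ M ω = m ∧ Y ω = y)
        = Pr p (fun ω => RM ω = 1 ∧ M ω = m ∧ RY ω = v ∧ X ω = x ∧ A ω = a ∧ Y ω = y) :=
          Pr_congr p (fun ω => by tauto)
      _ = c1 * Pr p (fun ω => M ω = m ∧ RY ω = v ∧ X ω = x ∧ A ω = a ∧ Y ω = y) := key
      _ = c1 * Pr p (fun ω => RY ω = v ∧ X ω = x ∧ A ω = a ∧ M ω = m ∧ Y ω = y) := by rw [e1]
  -- N4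
  have N4 : Pr p (fun ω => RM ω = 1 ∧ (X ω = x ∧ A ω = a ∧ Y ω = y ∧ RY ω = 1))
      = c1 * Pr p (fun ω => X ω = x ∧ A ω = a ∧ Y ω = y ∧ RY ω = 1) := by
    apply collapse p hp _ _ M c1
    intro v hv
    have e1 : Pr p (fun ω => M ω = v ∧ RY ω = 1 ∧ X ω = x ∧ A ω = a ∧ Y ω = y)
        = Pr p (fun ω => M ω = v ∧ X ω = x ∧ A ω = a ∧ Y ω = y ∧ RY ω = 1) :=
      Pr_congr p (fun ω => by tauto)
    have hpos : 0 < Pr p (fun ω => M ω = v ∧ RY ω = 1 ∧ X ω = x ∧ A ω = a ∧ Y ω = y) := by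
      rw [e1]; exact hv
    have key := cPr_mul p (ne_of_gt hpos) (h1 1 v 1 x a y hpos)
    calc Pr p (fun ω => RM ω = 1 ∧ M ω = v ∧ X ω = x ∧ A ω = a ∧ Y ω = y ∧ RY ω = 1)
        = Pr p (fun ω => RM ω = 1 ∧ M ω = v ∧ RY ω = 1 ∧ X ω = x ∧ A ω = a ∧ Y ω = y) :=
          Pr_congr p (fun ω => by tauto)
      _ = c1 * Pr p (fun ω => M ω = v ∧ RY ω = 1 ∧ X ω = x ∧ A ω = a ∧ Y ω = y) := key
      _ = c1 * Pr p (fun ω => M ω = v ∧ X ω = x ∧ A ω = a ∧ Y ω = y ∧ RY ω = 1) := by rw [e1]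
  -- E1
  have E1 : cPr p (fun ω => RY ω = 1) (fun ω => X ω = x ∧ A ω = a ∧ M ω = m ∧ RM ω = 1) = c2 := by
    unfold cPr
    rw [N1, mul_div_assoc, div_self (ne_of_gt hXAMR), mul_one]
  -- E2
  have E2 : cPr p (fun ω => RM ω = 1 ∧ RY ω = 1)
      (fun ω => X ω = x ∧ A ω = a ∧ M ω = m ∧ Y ω = y) = c1 * c2 := by
    unfold cPr
    have e1 : Pr p (fun ω => (RM ω = 1 ∧ RY ω = 1) ∧ X ω = x ∧ A ω = a ∧ M ω = m ∧ Y ω = y)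
        = Pr p (fun ω => RY ω = 1 ∧ (X ω = x ∧ A ω = a ∧ M ω = m ∧ Y ω = y ∧ RM ω = 1)) :=
      Pr_congr p (fun ω => by tauto)
    have e2 : Pr p (fun ω => X ω = x ∧ A ω = a ∧ M ω = m ∧ Y ω = y ∧ RM ω = 1)
        = Pr p (fun ω => RM ω = 1 ∧ (X ω = x ∧ A ω = a ∧ M ω = m ∧ Y ω = y)) :=
      Pr_congr p (fun ω => by tauto)
    rw [e1, N2, e2, N3]
    field_simp
  -- E3
  have E3 : cPr p (fun ω => RM ω = 1) (fun ω => X ω = x ∧ A ω = a ∧ Y ω = y ∧ RY ω = 1) = c1 := by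
    unfold cPr
    rw [N4, mul_div_assoc, div_self (ne_of_gt hXAYR), mul_one]
  rw [E2] at hcc
  rw [E3] at hcr
  have hc2 : 0 < c2 := by
    rcases mul_pos_iff.mp hcc with ⟨_, h⟩ | ⟨h, _⟩
    · exact h
    · linarith
  rw [E1, E2, E3]
  field_simp
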